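/- Let ξ, η ∈ 𝒞 and let z, w ∈ ℂ with |z| < r and |w| < r. Then (1/(4π²)) ∬_{|a|=r, |b|=r} ⟨C_Φ(a,b) · ξ/(a − conj(w)), η/(b − conj(z))⟩_𝒞 da dconj(b) = ⟨((Φ(conj(z))* + Φ(conj(w)))/(1 − z·conj(w))) ξ, η⟩_𝒞. -/

import Mathlib

open ComplexConjugate

noncomputable section

variable {C : Type*} [NormedAddCommGroup C] [InnerProductSpace ℂ C] [CompleteSpace C]

/-- The inner product of the paper, linear in the first entry:
`⟨x, y⟩_𝒞 := ⟪y, x⟫` (Mathlib's inner product is conjugate-linear in the first entry). -/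
def ip (x y : C) : ℂ := inner ℂ y x

/-- The kernel `C_Φ(a,b) = (Φ(a) + Φ(b)*)/(1 - a·conj b)`. -/
def CPhi (Φ : ℂ → C →L[ℂ] C) (a b : ℂ) : C →L[ℂ] C :=
  (1 - a * conj b)⁻¹ • (Φ a + ContinuousLinearMap.adjoint (Φ b))

/-- Point `r e^{is}` on the circle of radius `r`. -/
def circ (r s : ℝ) : ℂ := (r : ℂ) * Complex.exp (Complex.I * s)

/-- The function `f(z) = Σ_{u≥1} f_u z^{-u}` associated with a coefficient sequence
(`f u` is the coefficient `f_{u+1}`). -/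
def Hfun (f : ℕ → C) : ℂ → C := fun z => ∑' u : ℕ, (z ^ (u + 1))⁻¹ • f u

/-- The sesquilinear form
`[F,G]_Φ = (1/4π²) ∬_{|a|=r,|b|=r} ⟨C_Φ(a,b) F(a), G(b)⟩ da dconj(b)`, written with the
parametrization `a = r e^{is}`, `b = r e^{it}`, `da = i r e^{is} ds`,
`dconj(b) = -i r e^{-it} dt`. -/
def formPhi (Φ : ℂ → C →L[ℂ] C) (r : ℝ) (F G : ℂ → C) : ℂ :=
  (1 / (4 * (Real.pi : ℂ) ^ 2)) *
    ∫ s in (0:ℝ)..(2 * Real.pi), ∫ t in (0:ℝ)..(2 * Real.pi),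
      ip (CPhi Φ (circ r s) (circ r t) (F (circ r s))) (G (circ r t)) *
        (Complex.I * (r : ℂ) * Complex.exp (Complex.I * s)) *
        (-Complex.I * (r : ℂ) * Complex.exp (-Complex.I * t))


/-! ### Auxiliary lemmas -/


lemma hasDerivAt_conj_conj {f : ℂ → ℂ} {f' x : ℂ} (hf : HasDerivAt f f' (conj x)) :
    HasDerivAt (fun u => conj (f (conj u))) (conj f') x := by
  rw [hasDerivAt_iff_tendsto_slope] at hf ⊢
  have h1 : Filter.Tendsto (conj : ℂ → ℂ) (nhdsWithin x {x}ᶜ) (nhdsWithin (conj x) {conj x}ᶜ) := by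
    apply ContinuousWithinAt.tendsto_nhdsWithin (Complex.continuous_conj.continuousWithinAt)
    intro y hy hcy
    exact hy (by simpa using congrArg conj hcy)
  have h2 := (Complex.continuous_conj.tendsto f').comp (hf.comp h1)
  refine h2.congr fun y => ?_
  simp only [Function.comp_apply, slope, vsub_eq_sub, smul_eq_mul, map_mul, map_inv₀, map_sub,
    Complex.conj_conj]

lemma norm_circ {r : ℝ} (hr : 0 ≤ r) (s : ℝ) : ‖circ r s‖ = r := by
  simp [circ, map_mul, Complex.norm_exp,
    _root_.abs_of_nonneg hr]

lemma conj_circ (r t : ℝ) : conj (circ r t) = (r : ℂ) * Complex.exp (-Complex.I * t) := by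
  simp [circ, map_mul, ← Complex.exp_conj, Complex.conj_ofReal]

lemma circ_eq_circleMap (r t : ℝ) : circ r t = circleMap 0 r t := by
  simp [circ, circleMap, mul_comm]

lemma cauchy {f : ℂ → ℂ} {r : ℝ} (hr : 0 < r) (hf : DiffContOnCl ℂ f (Metric.ball 0 r))
    {c : ℂ} (hc : ‖c‖ < r) :
    (∫ t in (0:ℝ)..(2*Real.pi), (Complex.I * circ r t) * ((circ r t - c)⁻¹ * f (circ r t)))
      = (2 * Real.pi * Complex.I) * f c := by
  have h := hf.circleIntegral_sub_inv_smul (c := 0) (w := c)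
    (by simpa [Metric.mem_ball, dist_zero_right] using hc)
  rw [circleIntegral] at h
  simp only [deriv_circleMap, smul_eq_mul] at h
  rw [← h]
  apply intervalIntegral.integral_congr
  intro t _
  simp only [circ_eq_circleMap]
  ring

lemma reflect (F : ℂ → ℂ) (r : ℝ) :
    (∫ t in (0:ℝ)..(2*Real.pi), F (conj (circ r t))) = ∫ t in (0:ℝ)..(2*Real.pi), F (circ r t) := by
  have h1 : ∀ t : ℝ, conj (circ r t) = circ r (-t) := by
    intro t
    rw [conj_circ]
    simp [circ]
  have h2 : (∫ t in (0:ℝ)..(2*Real.pi), F (conj (circ r t)))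
      = ∫ t in (0:ℝ)..(2*Real.pi), (fun t' => F (circ r t')) (-t) := by
    apply intervalIntegral.integral_congr
    intro t _
    simp [h1]
  rw [h2, intervalIntegral.integral_comp_neg (fun t' => F (circ r t'))]
  have per : Function.Periodic (fun t' => F (circ r t')) (2 * Real.pi) := by
    intro t
    simp only [circ]
    have e : (Complex.I * ((t + 2*Real.pi : ℝ) : ℂ)) = Complex.I * t + 2*Real.pi*Complex.I := by
      push_cast; ring
    rw [e, Complex.exp_add, Complex.exp_two_pi_mul_I, mul_one]
  have hper := per.intervalIntegral_add_eq (-(2*Real.pi)) 0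
  simp only [neg_add_cancel, zero_add] at hper
  rw [neg_zero, hper]

/-- for `|z| < r`, `|w| < r`,
`(1/4π²) ∬_{|a|=r,|b|=r} ⟨C_Φ(a,b) ξ/(a-conj w), η/(b-conj z)⟩ da dconj(b)
  = ⟨((Φ(conj z)* + Φ(conj w))/(1-z·conj w)) ξ, η⟩`. -/
theorem statement13 {C : Type*} [NormedAddCommGroup C] [InnerProductSpace ℂ C] [CompleteSpace C]
    (r r₀ : ℝ) (hr0 : 0 < r) (hrr0 : r < r₀) (hr01 : r₀ < 1)
    (Φ : ℂ → C →L[ℂ] C)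
    (hΦa : AnalyticOnNhd ℂ Φ (Metric.ball (0 : ℂ) r₀))
    (hΦc : ContinuousOn Φ (Metric.closedBall (0 : ℂ) r₀))
    (ξ η : C) (z w : ℂ) (hz : ‖z‖ < r) (hw : ‖w‖ < r) :
    formPhi Φ r (fun a => (a - conj w)⁻¹ • ξ) (fun b => (b - conj z)⁻¹ • η)
      = ip (((1 - z * conj w)⁻¹ : ℂ) •
            ((ContinuousLinearMap.adjoint (Φ (conj z)) + Φ (conj w)) ξ)) η := by
  have hr1 : r < 1 := hrr0.trans hr01
  have hsub : Metric.closedBall (0:ℂ) r ⊆ Metric.ball (0:ℂ) r₀ := Metric.closedBall_subset_ball hrr0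
  set g : ℂ → ℂ := fun x => (inner ℂ η (Φ x ξ) : ℂ) with hg_def
  set h' : ℂ → ℂ := fun u => conj ((inner ℂ ξ (Φ (conj u) η) : ℂ)) with hh_def
  -- differentiability of g and h'
  have hg : ∀ x ∈ Metric.closedBall (0:ℂ) r, DifferentiableAt ℂ g x := by
    intro x hx
    have h1 : DifferentiableAt ℂ (fun y => Φ y ξ) x :=
      ((hΦa x (hsub hx)).differentiableAt).clm_apply (differentiableAt_const ξ)
    exact ((innerSL ℂ η).differentiableAt).comp x h1
  have hH : ∀ x ∈ Metric.closedBall (0:ℂ) r, DifferentiableAt ℂ (fun b => (inner ℂ ξ (Φ b η) : ℂ)) x := by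
    intro x hx
    have h1 : DifferentiableAt ℂ (fun y => Φ y η) x :=
      ((hΦa x (hsub hx)).differentiableAt).clm_apply (differentiableAt_const η)
    exact ((innerSL ℂ ξ).differentiableAt).comp x h1
  have hh' : ∀ x ∈ Metric.closedBall (0:ℂ) r, DifferentiableAt ℂ h' x := by
    intro x hx
    have hcx : conj x ∈ Metric.closedBall (0:ℂ) r := by
      simp only [Metric.mem_closedBall, dist_zero_right] at hx ⊢
      simpa [RCLike.norm_conj] using hx
    exact (hasDerivAt_conj_conj ((hH _ hcx).hasDerivAt)).differentiableAt
  have mk : ∀ f : ℂ → ℂ, (∀ x ∈ Metric.closedBall (0:ℂ) r, DifferentiableAt ℂ f x) →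
      DiffContOnCl ℂ f (Metric.ball (0:ℂ) r) := by
    intro f hf
    apply DifferentiableOn.diffContOnCl
    rw [closure_ball (0:ℂ) hr0.ne']
    exact fun x hx => (hf x hx).differentiableWithinAt
  have hne : ∀ c x : ℂ, ‖c‖ ≤ r → ‖x‖ ≤ r → (1 : ℂ) - c * x ≠ 0 := by
    intro c x hc hx h
    rw [sub_eq_zero] at h
    have h1 : ‖c * x‖ < 1 := by
      rw [norm_mul]
      nlinarith [norm_nonneg c, norm_nonneg x]
    rw [← h] at h1
    simp at h1
  have hIs : ∀ s : ℝ, Complex.I * (r:ℂ) * Complex.exp (Complex.I * s) = Complex.I * circ r s := by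
    intro s; simp only [circ]; ring
  have hIt : ∀ t : ℝ, -Complex.I * (r:ℂ) * Complex.exp (-Complex.I * t)
      = -(Complex.I * conj (circ r t)) := by
    intro t; rw [conj_circ]; ring
  set B : ℝ → ℂ → ℂ := fun s u =>
    (-(Complex.I * u)) * ((u - z)⁻¹ * ((1 - circ r s * u)⁻¹ * (g (circ r s) + h' u))) with hB_def
  have key : ∀ s t : ℝ,
      ip (CPhi Φ (circ r s) (circ r t) ((circ r s - conj w)⁻¹ • ξ)) ((circ r t - conj z)⁻¹ • η) *
        (Complex.I * (r:ℂ) * Complex.exp (Complex.I * s)) *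
        (-Complex.I * (r:ℂ) * Complex.exp (-Complex.I * t))
      = ((Complex.I * circ r s) * (circ r s - conj w)⁻¹) * B s (conj (circ r t)) := by
    intro s t
    rw [hIs, hIt]
    simp only [ip, CPhi, hB_def, hg_def, hh_def, ContinuousLinearMap.smul_apply,
      ContinuousLinearMap.add_apply, map_smul, inner_smul_left, inner_smul_right, inner_add_right,
      ContinuousLinearMap.adjoint_inner_right, map_inv₀, map_sub, Complex.conj_conj, smul_eq_mul,
      inner_conj_symm]
    ring
  have q_dc : ∀ s : ℝ,
      DiffContOnCl ℂ (fun u => (1 - circ r s * u)⁻¹ * (g (circ r s) + h' u))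
        (Metric.ball (0:ℂ) r) := by
    intro s
    apply mk
    intro x hx
    have hx' : ‖x‖ ≤ r := by simpa [Metric.mem_closedBall, dist_zero_right] using hx
    have h1 : DifferentiableAt ℂ (fun u => (1 - circ r s * u)⁻¹) x := by
      apply DifferentiableAt.inv
      · exact (differentiableAt_const _).sub ((differentiableAt_const _).mul differentiableAt_id)
      · exact hne _ _ (le_of_eq (norm_circ hr0.le s)) hx'
    exact h1.mul ((differentiableAt_const _).add (hh' x hx))
  have inner_int : ∀ s : ℝ, (∫ t in (0:ℝ)..(2*Real.pi), B s (conj (circ r t)))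
      = -((2*Real.pi*Complex.I) * ((1 - circ r s * z)⁻¹ * (g (circ r s) + h' z))) := by
    intro s
    rw [reflect (B s) r]
    have e : Set.EqOn (fun t => B s (circ r t))
        (fun t => -((Complex.I * circ r t) * ((circ r t - z)⁻¹ *
          ((fun u => (1 - circ r s * u)⁻¹ * (g (circ r s) + h' u)) (circ r t)))))
        (Set.uIcc (0:ℝ) (2*Real.pi)) := by
      intro t _
      simp only [hB_def]
      ring
    rw [intervalIntegral.integral_congr e, intervalIntegral.integral_neg,
      cauchy hr0 (q_dc s) hz]
  have hw' : ‖conj w‖ < r := by simpa [RCLike.norm_conj] using hw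
  have K_dc : DiffContOnCl ℂ (fun a => (1 - a * z)⁻¹ * (g a + h' z)) (Metric.ball (0:ℂ) r) := by
    apply mk
    intro x hx
    have hx' : ‖x‖ ≤ r := by simpa [Metric.mem_closedBall, dist_zero_right] using hx
    have h1 : DifferentiableAt ℂ (fun a => (1 - a * z)⁻¹) x := by
      apply DifferentiableAt.inv
      · exact (differentiableAt_const _).sub (differentiableAt_id.mul (differentiableAt_const _))
      · exact hne _ _ hx' hz.le
    exact h1.mul ((hg x hx).add (differentiableAt_const _))
  have outer : ∀ s : ℝ,
      (∫ t in (0:ℝ)..(2*Real.pi),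
        ip (CPhi Φ (circ r s) (circ r t) ((circ r s - conj w)⁻¹ • ξ)) ((circ r t - conj z)⁻¹ • η) *
          (Complex.I * (r:ℂ) * Complex.exp (Complex.I * s)) *
          (-Complex.I * (r:ℂ) * Complex.exp (-Complex.I * t)))
      = (-(2*Real.pi*Complex.I)) * ((Complex.I * circ r s) * ((circ r s - conj w)⁻¹ *
          ((fun a => (1 - a * z)⁻¹ * (g a + h' z)) (circ r s)))) := by
    intro s
    rw [intervalIntegral.integral_congr (g := fun t =>
      ((Complex.I * circ r s) * (circ r s - conj w)⁻¹) * B s (conj (circ r t)))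
      (fun t _ => key s t)]
    rw [intervalIntegral.integral_const_mul, inner_int s]
    ring
  have main : (∫ s in (0:ℝ)..(2*Real.pi), ∫ t in (0:ℝ)..(2*Real.pi),
      ip (CPhi Φ (circ r s) (circ r t) ((circ r s - conj w)⁻¹ • ξ)) ((circ r t - conj z)⁻¹ • η) *
        (Complex.I * (r:ℂ) * Complex.exp (Complex.I * s)) *
        (-Complex.I * (r:ℂ) * Complex.exp (-Complex.I * t)))
      = (-(2*Real.pi*Complex.I)) * ((2*Real.pi*Complex.I) *
          ((1 - conj w * z)⁻¹ * (g (conj w) + h' z))) := by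
    rw [intervalIntegral.integral_congr (g := fun s =>
      (-(2*Real.pi*Complex.I)) * ((Complex.I * circ r s) * ((circ r s - conj w)⁻¹ *
        ((fun a => (1 - a * z)⁻¹ * (g a + h' z)) (circ r s)))))
      (fun s _ => outer s)]
    rw [intervalIntegral.integral_const_mul, cauchy hr0 K_dc hw']
  have hπ : (Real.pi : ℂ) ≠ 0 := by exact_mod_cast Real.pi_ne_zero
  have hRHS : ip (((1 - z * conj w)⁻¹ : ℂ) •
      ((ContinuousLinearMap.adjoint (Φ (conj z)) + Φ (conj w)) ξ)) η
      = (1 - z * conj w)⁻¹ * (g (conj w) + h' z) := by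
    simp only [ip, ContinuousLinearMap.add_apply, inner_smul_right, inner_add_right,
      ContinuousLinearMap.adjoint_inner_right, hg_def, hh_def, inner_conj_symm]
    ring
  have hconst : ∀ c : ℂ, (1/(4*(Real.pi:ℂ)^2)) *
      (-(2*(Real.pi:ℂ)*Complex.I) * (2*(Real.pi:ℂ)*Complex.I * c)) = c := by
    intro c
    field_simp
    linear_combination (-(4*c)) * Complex.I_mul_I
  simp only [formPhi]
  rw [main, hRHS]
  have hcomm : (1 : ℂ) - conj w * z = 1 - z * conj w := by ring
  rw [hcomm, hconst]


end
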